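/- Let q be a prime power, F_q the finite field with q elements, and let A be an invertible 3×3 matrix over F_q that is not a scalar multiple of the identity. Then the number of 1-dimensional subspaces W of F_q³ with A(W) = W is at most q + 2. -/

import Mathlib

open Module Submodule

lemma lines_le (F : Type) [Field F] [Fintype F] (V : Type) [AddCommGroup V] [Module F V]
    [FiniteDimensional F V] (hV : finrank F V = 2) (S : Set (Submodule F V))
    (hS : ∀ W ∈ S, finrank F W = 1) : Nat.card S ≤ Fintype.card F + 1 := by
  classical
  -- basis of V
  have b : Basis (Fin 2) F V := finBasisOfFinrankEq F V hV
  -- choose nonzero vector in each W ∈ S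
  have hex : ∀ W : S, ∃ v : V, v ∈ (W : Submodule F V) ∧ v ≠ 0 := by
    intro ⟨W, hW⟩
    have : (W : Submodule F V) ≠ ⊥ := by
      intro h
      have := hS W hW
      rw [h] at this
      simp [finrank_bot] at this
    simpa [Submodule.ne_bot_iff] using this
  choose v hv hv0 using hex
  have hspan : ∀ W : S, (W : Submodule F V) = F ∙ v W := by
    intro W
    refine (Submodule.eq_of_le_of_finrank_le ?_ ?_).symm
    · simpa [Submodule.span_le] using hv W
    · rw [hS W W.2, finrank_span_singleton (hv0 W)]
  -- the injection
  set g : S → Option F := fun W =>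
    if b.repr (v W) 0 = 0 then none else some (b.repr (v W) 1 / b.repr (v W) 0) with hg
  have hginj : Function.Injective g := by
    intro W W' h
    have key : ∃ a : F, a ≠ 0 ∧ v W' = a • v W := by
      by_cases h0 : b.repr (v W) 0 = 0
      · have h0' : b.repr (v W') 0 = 0 := by
          by_contra hc
          simp [hg, h0, hc] at h
        have h1 : b.repr (v W) 1 ≠ 0 := by
          intro hc
          apply hv0 W
          apply b.repr.injective
          ext i
          fin_cases i <;> simp [h0, hc]
        refine ⟨b.repr (v W') 1 / b.repr (v W) 1, ?_, ?_⟩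
        · have h1' : b.repr (v W') 1 ≠ 0 := by
            intro hc
            apply hv0 W'
            apply b.repr.injective
            ext i
            fin_cases i <;> simp [h0', hc]
          exact div_ne_zero h1' h1
        · apply b.repr.injective
          rw [map_smul]
          ext i
          fin_cases i
          · simp [h0, h0']
          · simp only [Finsupp.smul_apply, smul_eq_mul]
            exact (div_mul_cancel₀ _ h1).symm
      · have h0' : b.repr (v W') 0 ≠ 0 := by
          intro hc
          simp [hg, h0, hc] at h
        have heq : b.repr (v W) 1 / b.repr (v W) 0 = b.repr (v W') 1 / b.repr (v W') 0 := by
          simp [hg, h0, h0'] at h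
          exact h
        refine ⟨b.repr (v W') 0 / b.repr (v W) 0, div_ne_zero h0' h0, ?_⟩
        apply b.repr.injective
        rw [map_smul]
        ext i
        fin_cases i
        · simp [div_mul_cancel₀, h0]
        · show (b.repr (v W')) 1 = ((b.repr (v W') 0 / b.repr (v W) 0) • b.repr (v W)) 1
          simp only [Finsupp.smul_apply, smul_eq_mul]
          field_simp
          field_simp at heq
          linear_combination -heq
    obtain ⟨a, ha, hav⟩ := key
    have : (W' : Submodule F V) = (W : Submodule F V) := by
      rw [hspan W, hspan W', hav, Submodule.span_singleton_smul_eq (IsUnit.mk0 a ha) _]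
    exact Subtype.ext this.symm
  calc Nat.card S ≤ Nat.card (Option F) := Nat.card_le_card_of_injective g hginj
    _ = Fintype.card F + 1 := by simp [Nat.card_eq_fintype_card]

set_option maxHeartbeats 1000000 in
set_option synthInstance.maxHeartbeats 100000 in
/-- If `A` is an invertible 3×3 matrix over `F_q` that is not a scalar multiple of
the identity, then `A` fixes at most `q + 2` of the 1-dimensional subspaces
(projective points) of `F_q³`. -/
theorem stmt4 (q : ℕ) (hq : IsPrimePow q)
    (F : Type) [Field F] [Fintype F] (hF : Fintype.card F = q)
    (A : Matrix (Fin 3) (Fin 3) F) (hA : IsUnit A)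
    (hscalar : ∀ c : F, A ≠ c • (1 : Matrix (Fin 3) (Fin 3) F)) :
    Nat.card {W : Submodule F (Fin 3 → F) //
      Module.finrank F W = 1 ∧ Submodule.map A.mulVecLin W = W} ≤ q + 2 := by
  classical
  subst hF
  set f := A.mulVecLin with hf
  have hfin3 : finrank F (Fin 3 → F) = 3 := by simp
  set E : F → Submodule F (Fin 3 → F) := fun c => Module.End.eigenspace f c with hE
  have hind : iSupIndep E := Module.End.eigenspaces_iSupIndep f
  set S := {W : Submodule F (Fin 3 → F) //
      Module.finrank F W = 1 ∧ Submodule.map A.mulVecLin W = W} with hS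
  have hfinsub : Finite (Submodule F (Fin 3 → F)) :=
    Finite.of_injective _ (SetLike.coe_injective (A := Submodule F (Fin 3 → F)))
  have hfinS : Finite S := Subtype.finite
  -- every fixed line has an eigenvalue
  have key : ∀ W : S, ∃ c : F, (W : Submodule F (Fin 3 → F)) ≤ E c := by
    intro ⟨W, h1, h2⟩
    obtain ⟨v, hv, hv0⟩ : ∃ v, v ∈ W ∧ v ≠ 0 := by
      have : W ≠ ⊥ := by
        intro h
        rw [h] at h1
        simp [finrank_bot] at h1
      simpa [Submodule.ne_bot_iff] using this
    have hWspan : W = F ∙ v := by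
      refine (Submodule.eq_of_le_of_finrank_le ?_ ?_).symm
      · simpa [Submodule.span_le] using hv
      · rw [h1, finrank_span_singleton hv0]
    have hfv : f v ∈ W := by
      rw [← h2]
      exact Submodule.mem_map_of_mem hv
    rw [hWspan, Submodule.mem_span_singleton] at hfv
    obtain ⟨c, hc⟩ := hfv
    refine ⟨c, ?_⟩
    intro w hw
    change w ∈ W at hw
    rw [hWspan, Submodule.mem_span_singleton] at hw
    obtain ⟨a, ha⟩ := hw
    rw [hE]
    simp only [Module.End.mem_eigenspace_iff]
    rw [← ha, map_smul, ← hc, smul_comm]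
  choose ev hev using key
  have hd1 : ∀ W : S, 1 ≤ finrank F ↥(E (ev W)) := by
    intro W
    have h := Submodule.finrank_mono (hev W)
    rw [W.2.1] at h
    exact h
  have hd2 : ∀ c : F, finrank F ↥(E c) ≤ 2 := by
    intro c
    by_contra hlt
    push_neg at hlt
    have h3 : finrank F ↥(E c) = 3 := by
      have := Submodule.finrank_le (E c)
      omega
    have htop : E c = ⊤ := Submodule.eq_top_of_finrank_eq (by rw [h3, hfin3])
    apply hscalar c
    ext i j
    have hv1 : f (Pi.single j 1) = c • (Pi.single j 1 : Fin 3 → F) := by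
      have : (Pi.single j 1 : Fin 3 → F) ∈ E c := htop ▸ Submodule.mem_top
      exact Module.End.mem_eigenspace_iff.mp this
    have h2 := congrFun hv1 i
    rw [hf] at h2
    simp only [Matrix.mulVecLin_apply, Matrix.mulVec_single, mul_one, Pi.smul_apply,
      smul_eq_mul, MulOpposite.op_one, one_smul, Matrix.col_apply] at h2
    rw [h2]
    simp [Matrix.one_apply, Pi.single_apply, eq_comm]
  have hsum2 : ∀ a b : F, a ≠ b → finrank F ↥(E a) + finrank F ↥(E b) ≤ 3 := by
    intro a b hab
    have hdis : Disjoint (E a) (E b) := hind.pairwiseDisjoint hab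
    have h := Submodule.finrank_sup_add_finrank_inf_eq (E a) (E b)
    rw [hdis.eq_bot, finrank_bot] at h
    have hle := Submodule.finrank_le (E a ⊔ E b)
    omega
  have hsum3 : ∀ a b c : F, a ≠ b → c ≠ a → c ≠ b →
      finrank F ↥(E a) + finrank F ↥(E b) + finrank F ↥(E c) ≤ 3 := by
    intro a b c hab hca hcb
    have hdis : Disjoint (E a) (E b) := hind.pairwiseDisjoint hab
    have h := Submodule.finrank_sup_add_finrank_inf_eq (E a) (E b)
    rw [hdis.eq_bot, finrank_bot] at h
    have hdis2 : Disjoint (E c) (E a ⊔ E b) := by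
      have hc : c ∉ ({a, b} : Set F) := by simp [hca, hcb]
      have := hind.disjoint_biSup (t := E) hc
      rwa [iSup_pair] at this
    have h2 := Submodule.finrank_sup_add_finrank_inf_eq (E c) (E a ⊔ E b)
    rw [hdis2.eq_bot, finrank_bot] at h2
    have hle := Submodule.finrank_le (E c ⊔ (E a ⊔ E b))
    omega
  by_cases hcase : ∃ c₀ : F, finrank F ↥(E c₀) = 2
  · obtain ⟨c₀, hc₀⟩ := hcase
    -- other eigenvalues have 1-dim eigenspaces and there is at most one of them
    have hsingle : ∀ W : S, ev W ≠ c₀ → (W : Submodule F (Fin 3 → F)) = E (ev W) := by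
      intro W hWc
      refine Submodule.eq_of_le_of_finrank_le (hev W) ?_
      rw [W.2.1]
      have := hsum2 (ev W) c₀ hWc
      omega
    have h2 : Nat.card {W : S // ev W ≠ c₀} ≤ 1 := by
      rw [Finite.card_le_one_iff_subsingleton]
      constructor
      intro X Y
      have hevv : ev X.1 = ev Y.1 := by
        by_contra hne
        have := hsum3 (ev X.1) (ev Y.1) c₀ hne (Ne.symm X.2) (Ne.symm Y.2)
        have := hd1 X.1
        have := hd1 Y.1
        omega
      have hXY : (X.1 : Submodule F (Fin 3 → F)) = (Y.1 : Submodule F (Fin 3 → F)) := by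
        rw [hsingle X.1 X.2, hsingle Y.1 Y.2, hevv]
      exact Subtype.ext (Subtype.ext hXY)
    have h1 : Nat.card {W : S // ev W = c₀} ≤ Fintype.card F + 1 := by
      -- inject into lines of the eigenspace E c₀
      have := lines_le F ↥(E c₀) hc₀
        (Set.range fun W : {W : S // ev W = c₀} =>
          Submodule.comap (E c₀).subtype (W : S).1) ?_
      · refine le_trans (Nat.card_le_card_of_injective
          (fun W : {W : S // ev W = c₀} =>
            (⟨Submodule.comap (E c₀).subtype (W : S).1, Set.mem_range_self W⟩ :
              (Set.range fun W : {W : S // ev W = c₀} =>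
                Submodule.comap (E c₀).subtype (W : S).1))) ?_) this
        intro W W' h
        have h' : Submodule.comap (E c₀).subtype (W : S).1
            = Submodule.comap (E c₀).subtype (W' : S).1 := congrArg Subtype.val h
        have hW : ((W : S) : Submodule F (Fin 3 → F)) ≤ E c₀ :=
          (hev W.1).trans (by rw [W.2])
        have hW' : ((W' : S) : Submodule F (Fin 3 → F)) ≤ E c₀ :=
          (hev W'.1).trans (by rw [W'.2])
        have hval : ((W : S) : Submodule F (Fin 3 → F))
            = ((W' : S) : Submodule F (Fin 3 → F)) := by
          have := congrArg (Submodule.map (E c₀).subtype) h'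
          rwa [Submodule.map_comap_subtype, Submodule.map_comap_subtype,
            inf_eq_right.mpr hW, inf_eq_right.mpr hW'] at this
        have hS' : (W : S) = (W' : S) := Subtype.ext hval
        exact Subtype.ext hS'
      · rintro X ⟨W, rfl⟩
        have hW : ((W : S) : Submodule F (Fin 3 → F)) ≤ E c₀ :=
          (hev W.1).trans (by rw [W.2])
        have hfr : finrank F
              ↥(Submodule.comap (E c₀).subtype ((W : S) : Submodule F (Fin 3 → F)))
            = finrank F ↥((W : S) : Submodule F (Fin 3 → F)) :=
          (Submodule.comapSubtypeEquivOfLe hW).finrank_eq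
        rw [hfr, (W : S).2.1]
    have hsplit : Nat.card S ≤
        Nat.card {W : S // ev W = c₀} + Nat.card {W : S // ev W ≠ c₀} := by
      have : Fintype S := Fintype.ofFinite S
      rw [Nat.card_eq_fintype_card, Nat.card_eq_fintype_card, Nat.card_eq_fintype_card]
      rw [Fintype.card_subtype_compl (fun W : S => ev W = c₀)]
      have := Fintype.card_subtype_le (fun W : S => ev W = c₀)
      omega
    omega
  · push_neg at hcase
    have hd1' : ∀ W : S, finrank F ↥(E (ev W)) = 1 := by
      intro W
      have := hd2 (ev W)
      have := hd1 W
      have := hcase (ev W)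
      omega
    have hWE : ∀ W : S, (W : Submodule F (Fin 3 → F)) = E (ev W) := by
      intro W
      refine Submodule.eq_of_le_of_finrank_le (hev W) ?_
      rw [W.2.1, hd1' W]
    have hne : ∀ W : S, E (ev W) ≠ ⊥ := by
      intro W h
      have := hd1' W
      rw [h] at this
      simp [finrank_bot] at this
    have : Fintype {c : F // E c ≠ ⊥} := hind.fintypeNeBotOfFiniteDimensional
    have hcard3 : Fintype.card {c : F // E c ≠ ⊥} ≤ 3 := by
      have := hind.subtype_ne_bot_le_finrank
      omega
    have hinj : Function.Injective (fun W : S => (⟨ev W, hne W⟩ : {c : F // E c ≠ ⊥})) := by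
      intro W W' h
      have : ev W = ev W' := congrArg Subtype.val h
      exact Subtype.ext (by rw [hWE W, hWE W', this])
    have := Nat.card_le_card_of_injective _ hinj
    rw [Nat.card_eq_fintype_card (α := {c : F // E c ≠ ⊥})] at this
    have hq1 : 1 ≤ Fintype.card F := Fintype.card_pos
    omega
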